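/- Let (Ω, F) be a measurable space with a filtration (F_t)_{t∈ℝ₊} satisfying ⋁_{t} F_t ⊆ F. Let ℰ* := {⋃_{k=1}^{n} ⟦ρ_k, τ_k⟧ : n ∈ ℕ, ρ_k predictable times, τ_k stopping times with τ_k < ∞} ∪ {∅}. Then every set P in the predictable σ-algebra 𝒫 is produced by the Souslin operation applied to a monotone Souslin scheme with values in ℰ*. -/

import Mathlib

open MeasureTheory Set
open scoped NNReal ENNReal


variable {Ω : Type*}

/-- A stopping time with respect to the filtration `𝔽`. -/
def IsStopTime {F : MeasurableSpace Ω} (𝔽 : Filtration ℝ≥0 F) (τ : Ω → ℝ≥0∞) : Prop :=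
  ∀ t : ℝ≥0, MeasurableSet[𝔽 t] {ω | τ ω ≤ (t : ℝ≥0∞)}

/-- A predictable time: a stopping time announced by a nondecreasing sequence of
finite stopping times. -/
def IsPredTime {F : MeasurableSpace Ω} (𝔽 : Filtration ℝ≥0 F) (ρ : Ω → ℝ≥0∞) : Prop :=
  IsStopTime 𝔽 ρ ∧ ∃ ρs : ℕ → Ω → ℝ≥0∞,
    (∀ n, IsStopTime 𝔽 (ρs n)) ∧ (∀ n ω, ρs n ω < ⊤) ∧ (∀ n ω, ρs n ω ≤ ρ ω) ∧
    (∀ n ω, 0 < ρ ω → ρs n ω < ρ ω) ∧ (∀ ω, Monotone fun n => ρs n ω) ∧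
    (∀ ω, Filter.Tendsto (fun n => ρs n ω) Filter.atTop (nhds (ρ ω)))

/-- The graph `⟦τ⟧ ⊆ Ω × ℝ₊` of `τ : Ω → [0,∞]`. -/
def graph (τ : Ω → ℝ≥0∞) : Set (Ω × ℝ≥0) := {p | τ p.1 = (p.2 : ℝ≥0∞)}

/-- The stochastic interval `⟦τ, ∞⟦`. -/
def rayFrom (τ : Ω → ℝ≥0∞) : Set (Ω × ℝ≥0) := {p | τ p.1 ≤ (p.2 : ℝ≥0∞)}

/-- The stochastic interval `⟦ρ, τ⟧`. -/
def stInterval (ρ τ : Ω → ℝ≥0∞) : Set (Ω × ℝ≥0) :=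
  {p | ρ p.1 ≤ (p.2 : ℝ≥0∞) ∧ (p.2 : ℝ≥0∞) ≤ τ p.1}

/-- The predictable σ-algebra on `Ω × ℝ₊`. -/
def predictableSigma {F : MeasurableSpace Ω} (𝔽 : Filtration ℝ≥0 F) :
    MeasurableSpace (Ω × ℝ≥0) :=
  MeasurableSpace.generateFrom {s | ∃ ρ, IsPredTime 𝔽 ρ ∧ s = rayFrom ρ}

/-- The optional σ-algebra on `Ω × ℝ₊`. -/
def optionalSigma {F : MeasurableSpace Ω} (𝔽 : Filtration ℝ≥0 F) :
    MeasurableSpace (Ω × ℝ≥0) :=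
  MeasurableSpace.generateFrom {s | ∃ τ, IsStopTime 𝔽 τ ∧ s = rayFrom τ}

/-- The debut of a set `S ⊆ Ω × ℝ₊`. -/
noncomputable def debut (S : Set (Ω × ℝ≥0)) (ω : Ω) : ℝ≥0∞ :=
  ⨅ (t : ℝ≥0) (_ : (ω, t) ∈ S), (t : ℝ≥0∞)

/-- Projection of a subset of `Ω × ℝ₊` onto `Ω`. -/
def projOmega (S : Set (Ω × ℝ≥0)) : Set Ω := Prod.fst '' S

/-- The outer measure `ℙ*` induced by `ℙ`. -/
noncomputable def pstar {F : MeasurableSpace Ω} (P : Measure Ω) (A : Set Ω) : ℝ≥0∞ :=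
  ⨅ (E : Set Ω) (_ : A ⊆ E) (_ : MeasurableSet E), P E


/-- A Souslin scheme with values in `ℰ ∪ {E}`: `A k s` is the set indexed by the
finite sequence `(s 0, …, s k)` of length `k+1`. -/
def IsSouslinScheme {E : Type*} (ℰ : Set (Set E)) (A : (k : ℕ) → (Fin (k + 1) → ℕ) → Set E) :
    Prop :=
  ∀ k s, A k s ∈ ℰ ∨ A k s = Set.univ

/-- The set produced by the Souslin operation: `⋃_{n ∈ ℕ^ℕ} ⋂_k A_{n₁,…,n_k}`. -/
def souslinSet {E : Type*} (A : (k : ℕ) → (Fin (k + 1) → ℕ) → Set E) : Set E :=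
  ⋃ f : ℕ → ℕ, ⋂ k : ℕ, A k fun i => f i

/-- The Souslin class `S(ℰ)`. -/
def SouslinClass {E : Type*} (ℰ : Set (Set E)) : Set (Set E) :=
  {S | ∃ A, IsSouslinScheme ℰ A ∧ S = souslinSet A}

/-- A Souslin scheme is monotone if it is vertically and horizontally monotone. -/
def IsMonotoneScheme {E : Type*} (A : (k : ℕ) → (Fin (k + 1) → ℕ) → Set E) : Prop :=
  (∀ (k : ℕ) (s : Fin (k + 2) → ℕ), A (k + 1) s ⊆ A k fun i => s i.castSucc) ∧
  (∀ (k : ℕ) (s t : Fin (k + 1) → ℕ), (∀ i, s i ≤ t i) → A k s ⊆ A k t)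

/-- The class `ℰ*` of finite unions of stochastic intervals `⟦ρ_k, τ_k⟧` with `ρ_k`
predictable times and `τ_k` finite stopping times, together with `∅`. -/
def EStar {Ω : Type*} {F : MeasurableSpace Ω} (𝔽 : Filtration ℝ≥0 F) :
    Set (Set (Ω × ℝ≥0)) :=
  {D | D = ∅ ∨ ∃ (n : ℕ) (ρ τ : Fin (n + 1) → Ω → ℝ≥0∞),
    (∀ k, IsPredTime 𝔽 (ρ k)) ∧ (∀ k, IsStopTime 𝔽 (τ k)) ∧ (∀ k ω, τ k ω < ⊤) ∧
    D = ⋃ k, stInterval (ρ k) (τ k)}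

section Helpers
variable {F : MeasurableSpace Ω} {𝔽 : Filtration ℝ≥0 F}

lemma isStopTime_const (c : ℝ≥0∞) : IsStopTime 𝔽 (fun _ => c) := by
  intro t
  by_cases h : c ≤ (t : ℝ≥0∞)
  · have : {ω : Ω | c ≤ (t : ℝ≥0∞)} = univ := by ext ω; simp [h]
    rw [this]; exact MeasurableSet.univ
  · have : {ω : Ω | c ≤ (t : ℝ≥0∞)} = ∅ := by ext ω; simp [h]
    rw [this]; exact @MeasurableSet.empty _ (𝔽 t)

lemma IsStopTime.min' {τ τ' : Ω → ℝ≥0∞} (h : IsStopTime 𝔽 τ) (h' : IsStopTime 𝔽 τ') :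
    IsStopTime 𝔽 (fun ω => τ ω ⊓ τ' ω) := by
  intro t
  have : {ω | τ ω ⊓ τ' ω ≤ (t : ℝ≥0∞)} = {ω | τ ω ≤ (t:ℝ≥0∞)} ∪ {ω | τ' ω ≤ (t:ℝ≥0∞)} := by
    ext ω; simp [inf_le_iff]
  rw [this]; exact (h t).union (h' t)

lemma announce_iSup {ρ : Ω → ℝ≥0∞} {ρs : ℕ → Ω → ℝ≥0∞}
    (hmono : ∀ ω, Monotone fun n => ρs n ω)
    (htend : ∀ ω, Filter.Tendsto (fun n => ρs n ω) Filter.atTop (nhds (ρ ω))) (ω : Ω) :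
    (⨆ n, ρs n ω) = ρ ω :=
  tendsto_nhds_unique (tendsto_atTop_iSup (hmono ω)) (htend ω)

lemma IsPredTime.max' {ρ ρ' : Ω → ℝ≥0∞} (h : IsPredTime 𝔽 ρ) (h' : IsPredTime 𝔽 ρ') :
    IsPredTime 𝔽 (fun ω => ρ ω ⊔ ρ' ω) := by
  obtain ⟨hst, ρs, hρst, hfin, hle, hlt, hmono, htend⟩ := h
  obtain ⟨hst', ρs', hρst', hfin', hle', hlt', hmono', htend'⟩ := h'
  constructor
  · intro t
    have : {ω | ρ ω ⊔ ρ' ω ≤ (t:ℝ≥0∞)} = {ω | ρ ω ≤ (t:ℝ≥0∞)} ∩ {ω | ρ' ω ≤ (t:ℝ≥0∞)} := by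
      ext ω; simp [sup_le_iff]
    rw [this]; exact (hst t).inter (hst' t)
  · refine ⟨fun n ω => ρs n ω ⊔ ρs' n ω, ?_, ?_, ?_, ?_, ?_, ?_⟩
    · intro n t
      have : {ω | ρs n ω ⊔ ρs' n ω ≤ (t:ℝ≥0∞)}
          = {ω | ρs n ω ≤ (t:ℝ≥0∞)} ∩ {ω | ρs' n ω ≤ (t:ℝ≥0∞)} := by
        ext ω; simp [sup_le_iff]
      rw [this]; exact (hρst n t).inter (hρst' n t)
    · intro n ω; exact max_lt (hfin n ω) (hfin' n ω)
    · intro n ω; exact max_le_max (hle n ω) (hle' n ω)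
    · intro n ω h0
      rcases le_total (ρ ω) (ρ' ω) with hc | hc
      · have hpos : 0 < ρ' ω := lt_of_lt_of_le h0 (sup_le hc le_rfl)
        have h2 : ρs' n ω < ρ' ω := hlt' n ω hpos
        have h1 : ρs n ω < ρ' ω := by
          rcases hc.lt_or_eq with hc' | hc'
          · exact lt_of_le_of_lt (hle n ω) hc'
          · exact hc' ▸ hlt n ω (hc' ▸ hpos)
        calc ρs n ω ⊔ ρs' n ω < ρ' ω := max_lt h1 h2
          _ ≤ ρ ω ⊔ ρ' ω := le_max_right _ _
      · have hpos : 0 < ρ ω := lt_of_lt_of_le h0 (sup_le le_rfl hc)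
        have h1 : ρs n ω < ρ ω := hlt n ω hpos
        have h2 : ρs' n ω < ρ ω := by
          rcases hc.lt_or_eq with hc' | hc'
          · exact lt_of_le_of_lt (hle' n ω) hc'
          · exact hc' ▸ hlt' n ω (hc' ▸ hpos)
        calc ρs n ω ⊔ ρs' n ω < ρ ω := max_lt h1 h2
          _ ≤ ρ ω ⊔ ρ' ω := le_max_left _ _
    · intro ω; exact (hmono ω).max (hmono' ω)
    · intro ω; exact (htend ω).max (htend' ω)

lemma isPredTime_jump {ρ : Ω → ℝ≥0∞} (hρ : IsStopTime 𝔽 ρ) :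
    IsPredTime 𝔽 (fun ω => if ρ ω = 0 then (⊤ : ℝ≥0∞) else 0) := by
  have hmeas : ∀ t : ℝ≥0, MeasurableSet[𝔽 t] {ω | ρ ω ≠ 0} := by
    intro t
    have h0 : MeasurableSet[𝔽 t] {ω | ρ ω ≤ ((0:ℝ≥0) : ℝ≥0∞)} := 𝔽.mono (zero_le : (0:ℝ≥0) ≤ t) _ (hρ 0)
    have : {ω | ρ ω ≠ 0} = {ω | ρ ω ≤ ((0:ℝ≥0) : ℝ≥0∞)}ᶜ := by
      ext ω; simp [le_zero_iff]
    rw [this]; exact h0.compl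
  constructor
  · intro t
    have : {ω | (if ρ ω = 0 then (⊤:ℝ≥0∞) else 0) ≤ (t:ℝ≥0∞)} = {ω | ρ ω ≠ 0} := by
      ext ω; by_cases h : ρ ω = 0 <;> simp [h]
    rw [this]; exact hmeas t
  · refine ⟨fun n ω => if ρ ω = 0 then (n : ℝ≥0∞) else 0, ?_, ?_, ?_, ?_, ?_, ?_⟩
    · intro n t
      by_cases hn : (n : ℝ≥0∞) ≤ (t : ℝ≥0∞)
      · have : {ω | (if ρ ω = 0 then (n:ℝ≥0∞) else 0) ≤ (t:ℝ≥0∞)} = univ := by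
          ext ω; by_cases h : ρ ω = 0 <;> simp [h, hn]
        rw [this]; exact MeasurableSet.univ
      · have : {ω | (if ρ ω = 0 then (n:ℝ≥0∞) else 0) ≤ (t:ℝ≥0∞)} = {ω | ρ ω ≠ 0} := by
          ext ω; by_cases h : ρ ω = 0 <;> simp [h, hn]
        rw [this]; exact hmeas t
    · intro n ω
      by_cases h : ρ ω = 0
      · simp only [h, if_true]; exact ENNReal.natCast_lt_top n
      · simp only [h, if_false]; exact ENNReal.zero_lt_top
    · intro n ω; by_cases h : ρ ω = 0 <;> simp [h]
    · intro n ω h0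
      by_cases h : ρ ω = 0
      · simp only [h, if_true] at h0 ⊢; exact ENNReal.natCast_lt_top n
      · simp only [h, if_false] at h0; exact absurd h0 (lt_irrefl 0)
    · intro ω
      by_cases h : ρ ω = 0
      · simp only [h, if_true]; intro a b hab; exact Nat.cast_le.2 hab
      · simp only [h, if_false]; exact monotone_const
    · intro ω
      by_cases h : ρ ω = 0
      · simp only [h, if_true]; exact ENNReal.tendsto_nat_nhds_top
      · simp only [h, if_false]; exact tendsto_const_nhds
end Helpers

section EStarLemmas
variable {F : MeasurableSpace Ω} {𝔽 : Filtration ℝ≥0 F}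

lemma empty_mem_EStar : (∅ : Set (Ω × ℝ≥0)) ∈ EStar 𝔽 := Or.inl rfl

lemma stInterval_mem_EStar {ρ τ : Ω → ℝ≥0∞} (hρ : IsPredTime 𝔽 ρ) (hτ : IsStopTime 𝔽 τ)
    (hfin : ∀ ω, τ ω < ⊤) : stInterval ρ τ ∈ EStar 𝔽 :=
  Or.inr ⟨0, fun _ => ρ, fun _ => τ, fun _ => hρ, fun _ => hτ, fun _ => hfin,
    (Set.iUnion_const _).symm⟩

lemma EStar.union {S T : Set (Ω × ℝ≥0)} (hS : S ∈ EStar 𝔽) (hT : T ∈ EStar 𝔽) :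
    S ∪ T ∈ EStar 𝔽 := by
  rcases hS with rfl | ⟨n, ρ1, τ1, hρ1, hτ1, hf1, rfl⟩
  · simpa using hT
  rcases hT with rfl | ⟨m, ρ2, τ2, hρ2, hτ2, hf2, rfl⟩
  · simp only [union_empty]
    exact Or.inr ⟨n, ρ1, τ1, hρ1, hτ1, hf1, rfl⟩
  refine Or.inr ⟨n + m + 1,
    fun k => if h : (k : ℕ) < n + 1 then ρ1 ⟨k, h⟩ else ρ2 ⟨(k : ℕ) - (n+1), by omega⟩,
    fun k => if h : (k : ℕ) < n + 1 then τ1 ⟨k, h⟩ else τ2 ⟨(k : ℕ) - (n+1), by omega⟩,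
    ?_, ?_, ?_, ?_⟩
  · intro k; by_cases h : (k : ℕ) < n + 1
    · simp only [dif_pos h]; exact hρ1 _
    · simp only [dif_neg h]; exact hρ2 _
  · intro k; by_cases h : (k : ℕ) < n + 1
    · simp only [dif_pos h]; exact hτ1 _
    · simp only [dif_neg h]; exact hτ2 _
  · intro k ω; by_cases h : (k : ℕ) < n + 1
    · simp only [dif_pos h]; exact hf1 _ ω
    · simp only [dif_neg h]; exact hf2 _ ω
  · ext p
    simp only [mem_union, mem_iUnion]
    constructor
    · rintro (⟨i, hi⟩ | ⟨j, hj⟩)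
      · refine ⟨⟨(i : ℕ), by omega⟩, ?_⟩
        have h : ((⟨(i : ℕ), by omega⟩ : Fin (n + m + 1 + 1)) : ℕ) < n + 1 := i.isLt
        simp only [dif_pos h]
        exact hi
      · refine ⟨⟨n + 1 + (j : ℕ), by omega⟩, ?_⟩
        have h : ¬ ((⟨n + 1 + (j : ℕ), by omega⟩ : Fin (n + m + 1 + 1)) : ℕ) < n + 1 := by
          simp
          omega
        simp only [dif_neg h]
        convert hj using 3 <;> exact Fin.ext (by simp)
    · rintro ⟨k, hk⟩
      by_cases h : (k : ℕ) < n + 1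
      · simp only [dif_pos h] at hk; exact Or.inl ⟨_, hk⟩
      · simp only [dif_neg h] at hk; exact Or.inr ⟨_, hk⟩

lemma stInterval_inter {ρ ρ' τ τ' : Ω → ℝ≥0∞} :
    stInterval ρ τ ∩ stInterval ρ' τ'
      = stInterval (fun ω => ρ ω ⊔ ρ' ω) (fun ω => τ ω ⊓ τ' ω) := by
  ext p; simp only [stInterval, mem_inter_iff, mem_setOf_eq, sup_le_iff, le_inf_iff]; tauto

lemma EStar.inter {S T : Set (Ω × ℝ≥0)} (hS : S ∈ EStar 𝔽) (hT : T ∈ EStar 𝔽) :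
    S ∩ T ∈ EStar 𝔽 := by
  rcases hS with rfl | ⟨n, ρ1, τ1, hρ1, hτ1, hf1, rfl⟩
  · simp only [empty_inter]; exact empty_mem_EStar
  rcases hT with rfl | ⟨m, ρ2, τ2, hρ2, hτ2, hf2, rfl⟩
  · simp only [inter_empty]; exact empty_mem_EStar
  have hlt : ∀ k : Fin (n * m + n + m + 1), (k : ℕ) % (n + 1) < n + 1 :=
    fun k => Nat.mod_lt _ (Nat.succ_pos n)
  have hdiv : ∀ k : Fin (n * m + n + m + 1), (k : ℕ) / (n + 1) < m + 1 := by
    intro k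
    have hk : (k : ℕ) < (n + 1) * (m + 1) := by have := k.isLt; nlinarith [k.isLt]
    exact Nat.div_lt_of_lt_mul (by omega)
  refine Or.inr ⟨n * m + n + m,
    fun k ω => ρ1 ⟨(k : ℕ) % (n + 1), hlt k⟩ ω ⊔ ρ2 ⟨(k : ℕ) / (n + 1), hdiv k⟩ ω,
    fun k ω => τ1 ⟨(k : ℕ) % (n + 1), hlt k⟩ ω ⊓ τ2 ⟨(k : ℕ) / (n + 1), hdiv k⟩ ω,
    fun k => (hρ1 _).max' (hρ2 _),
    fun k => (hτ1 _).min' (hτ2 _),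
    fun k ω => lt_of_le_of_lt inf_le_left (hf1 _ ω), ?_⟩
  ext p
  simp only [mem_inter_iff, mem_iUnion, stInterval, mem_setOf_eq, sup_le_iff, le_inf_iff]
  constructor
  · rintro ⟨⟨i, hi1, hi2⟩, ⟨j, hj1, hj2⟩⟩
    have hkb : (i : ℕ) + (n + 1) * (j : ℕ) < n * m + n + m + 1 := by
      have h1 : (i : ℕ) < n + 1 := i.isLt
      have h2 : (j : ℕ) < m + 1 := j.isLt
      nlinarith
    have emod : ((i : ℕ) + (n + 1) * (j : ℕ)) % (n + 1) = (i : ℕ) := by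
      rw [Nat.add_mul_mod_self_left, Nat.mod_eq_of_lt i.isLt]
    have ediv : ((i : ℕ) + (n + 1) * (j : ℕ)) / (n + 1) = (j : ℕ) := by
      rw [Nat.add_mul_div_left _ _ (Nat.succ_pos n), Nat.div_eq_of_lt i.isLt, Nat.zero_add]
    refine ⟨⟨(i : ℕ) + (n + 1) * (j : ℕ), hkb⟩, ⟨?_, ?_⟩, ?_, ?_⟩
    · convert hi1 using 3 <;> rfl
    · convert hj1 using 3 <;> rfl
    · convert hi2 using 3 <;> rfl
    · convert hj2 using 3 <;> rfl
  · rintro ⟨k, ⟨h1, h2⟩, h3, h4⟩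
    exact ⟨⟨_, h1, h3⟩, ⟨_, h2, h4⟩⟩

lemma EStar.union' {S T : Set (Ω × ℝ≥0)}
    (hS : S ∈ EStar 𝔽 ∨ S = univ) (hT : T ∈ EStar 𝔽 ∨ T = univ) :
    S ∪ T ∈ EStar 𝔽 ∨ S ∪ T = univ := by
  rcases hS with hS | rfl
  · rcases hT with hT | rfl
    · exact Or.inl (EStar.union hS hT)
    · exact Or.inr (by simp)
  · exact Or.inr (by simp)

lemma EStar.inter' {S T : Set (Ω × ℝ≥0)}
    (hS : S ∈ EStar 𝔽 ∨ S = univ) (hT : T ∈ EStar 𝔽 ∨ T = univ) :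
    S ∩ T ∈ EStar 𝔽 ∨ S ∩ T = univ := by
  rcases hS with hS | rfl
  · rcases hT with hT | rfl
    · exact Or.inl (EStar.inter hS hT)
    · rw [inter_univ]; exact Or.inl hS
  · rw [univ_inter]; exact hT

lemma EStar.biUnion' (s : Finset ℕ) (X : ℕ → Set (Ω × ℝ≥0))
    (h : ∀ i ∈ s, X i ∈ EStar 𝔽 ∨ X i = univ) :
    (⋃ i ∈ s, X i) ∈ EStar 𝔽 ∨ (⋃ i ∈ s, X i) = univ := by
  classical
  induction s using Finset.induction_on with
  | empty => simp only [Finset.notMem_empty, iUnion_of_empty, iUnion_empty]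
             exact Or.inl empty_mem_EStar
  | insert a s ha ih =>
    rw [Finset.set_biUnion_insert]
    exact EStar.union' (h _ (Finset.mem_insert_self _ _))
      (ih fun i hi => h i (Finset.mem_insert_of_mem hi))

lemma EStar.biInter' (s : Finset ℕ) (X : ℕ → Set (Ω × ℝ≥0))
    (h : ∀ i ∈ s, X i ∈ EStar 𝔽 ∨ X i = univ) :
    (⋂ i ∈ s, X i) ∈ EStar 𝔽 ∨ (⋂ i ∈ s, X i) = univ := by
  classical
  induction s using Finset.induction_on with
  | empty => simp
  | insert a s ha ih =>
    rw [Finset.set_biInter_insert]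
    exact EStar.inter' (h _ (Finset.mem_insert_self _ _))
      (ih fun i hi => h i (Finset.mem_insert_of_mem hi))
end EStarLemmas

/-- The collection of sets produced by a monotone Souslin scheme with values in `ℰ*`. -/
def MSet {F : MeasurableSpace Ω} (𝔽 : Filtration ℝ≥0 F) : Set (Set (Ω × ℝ≥0)) :=
  {S | ∃ A, IsSouslinScheme (EStar 𝔽) A ∧ IsMonotoneScheme A ∧ S = souslinSet A}

section Schemes
variable {E : Type*}

lemma scheme_prefix_anti {A : (k : ℕ) → (Fin (k + 1) → ℕ) → Set E}
    (hA : IsMonotoneScheme A) (g : ℕ → ℕ) :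
    ∀ {k k' : ℕ}, k ≤ k' →
      (A k' fun i => g i) ⊆ A k fun i => g i := by
  intro k k' h
  induction k' with
  | zero => obtain rfl : k = 0 := Nat.le_zero.1 h
            exact subset_rfl
  | succ k' ih =>
    rcases eq_or_lt_of_le h with rfl | h'
    · exact subset_rfl
    · have step : (A (k' + 1) fun i => g i) ⊆ A k' fun i => g i := by
        have := hA.1 k' (fun i : Fin (k' + 2) => g i)
        simpa using this
      exact step.trans (ih (Nat.lt_succ_iff.1 h'))

/-- Scheme realizing a countable union. -/
def unionScheme (A : ℕ → (k : ℕ) → (Fin (k + 1) → ℕ) → Set E) :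
    (k : ℕ) → (Fin (k + 1) → ℕ) → Set E
  | 0, _ => univ
  | (k + 1), s => ⋃ i ∈ Finset.range (s 0 + 1), A i k fun j => s j.succ

/-- Scheme realizing a countable intersection. -/
def interScheme (A : ℕ → (k : ℕ) → (Fin (k + 1) → ℕ) → Set E) :
    (k : ℕ) → (Fin (k + 1) → ℕ) → Set E :=
  fun k s => ⋂ i ∈ Finset.range (k + 1), ⋂ j ∈ Finset.range (k + 1),
    if h : Nat.pair i j ≤ k then
      A i j (fun l => s ⟨Nat.pair i l, by
        have h1 : Nat.pair i (l : ℕ) ≤ Nat.pair i j := by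
          rcases (Nat.lt_succ_iff.1 l.isLt).lt_or_eq with h' | h'
          · exact (Nat.pair_lt_pair_right i h').le
          · rw [h']
        omega⟩)
    else univ

lemma unionScheme_monotone {A : ℕ → (k : ℕ) → (Fin (k + 1) → ℕ) → Set E}
    (hA : ∀ i, IsMonotoneScheme (A i)) : IsMonotoneScheme (unionScheme A) := by
  constructor
  · intro k s
    match k with
    | 0 => exact fun x _ => mem_univ x
    | (k + 1) =>
      intro x hx
      simp only [unionScheme, mem_iUnion, Finset.mem_range] at hx ⊢
      obtain ⟨i, hi, hx⟩ := hx
      have h1 : A i (k + 1) (fun j => s j.succ) ⊆ A i k fun j => s (j.castSucc).succ :=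
        (hA i).1 k _
      refine ⟨i, ?_, ?_⟩
      · simpa using hi
      · exact h1 hx
  · intro k s t hst
    match k with
    | 0 => exact subset_rfl
    | (k + 1) =>
      intro x hx
      simp only [unionScheme, mem_iUnion, Finset.mem_range] at hx ⊢
      obtain ⟨i, hi, hx⟩ := hx
      exact ⟨i, by have := hst 0; omega,
        (hA i).2 k _ _ (fun j => hst j.succ) hx⟩

lemma unionScheme_souslinSet {A : ℕ → (k : ℕ) → (Fin (k + 1) → ℕ) → Set E}
    (hA : ∀ i, IsMonotoneScheme (A i)) :
    souslinSet (unionScheme A) = ⋃ i, souslinSet (A i) := by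
  apply Set.Subset.antisymm
  · rintro x hx
    simp only [souslinSet, mem_iUnion] at hx
    obtain ⟨f, hf⟩ := hx
    have hf' := mem_iInter.1 hf
    set g : ℕ → ℕ := fun n => f (n + 1) with hg
    have key : ∀ k : ℕ, ∃ i : ℕ, i < f 0 + 1 ∧ x ∈ A i k fun j => g j := by
      intro k
      have := hf' (k + 1)
      simp only [unionScheme, mem_iUnion, Finset.mem_range] at this
      obtain ⟨i, hi, hx⟩ := this
      refine ⟨i, hi, ?_⟩
      have : (fun j : Fin (k + 1) => f (j.succ : ℕ)) = fun j : Fin (k + 1) => g j := by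
        funext j; simp [hg, Fin.val_succ]
      rwa [this] at hx
    choose I hIlt hxI using key
    have : ∃ y : Fin (f 0 + 1), (Set.Infinite ((fun k => (⟨I k, hIlt k⟩ : Fin (f 0 + 1))) ⁻¹' {y})) := by
      obtain ⟨y, hy⟩ := Finite.exists_infinite_fiber (fun k => (⟨I k, hIlt k⟩ : Fin (f 0 + 1)))
      exact ⟨y, Set.infinite_coe_iff.1 hy⟩
    obtain ⟨y, hy⟩ := this
    simp only [mem_iUnion]
    refine ⟨(y : ℕ), ?_⟩
    simp only [souslinSet, mem_iUnion]
    refine ⟨g, mem_iInter.2 fun k => ?_⟩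
    obtain ⟨k', hk'mem, hkk'⟩ := hy.exists_gt k
    have hIk' : I k' = (y : ℕ) := by
      have : (⟨I k', hIlt k'⟩ : Fin (f 0 + 1)) = y := hk'mem
      exact congrArg Fin.val this
    have := hxI k'
    rw [hIk'] at this
    exact scheme_prefix_anti (hA _) g hkk'.le this
  · refine iUnion_subset fun i => ?_
    rintro x hx
    simp only [souslinSet, mem_iUnion] at hx ⊢
    obtain ⟨g, hg⟩ := hx
    refine ⟨fun n => match n with | 0 => i | (n + 1) => g n, mem_iInter.2 fun k => ?_⟩
    match k with
    | 0 => exact mem_univ x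
    | (k + 1) =>
      simp only [unionScheme, mem_iUnion, Finset.mem_range]
      refine ⟨i, by simp, ?_⟩
      have : (fun j : Fin (k + 1) =>
          (fun n => match n with | 0 => i | (n + 1) => g n) ((j.succ : Fin (k + 2)) : ℕ))
          = fun j : Fin (k + 1) => g j := by
        funext j; simp [Fin.val_succ]
      rw [this]
      exact mem_iInter.1 hg k
end Schemes

section InterScheme
variable {E : Type*}

lemma interScheme_monotone {A : ℕ → (k : ℕ) → (Fin (k + 1) → ℕ) → Set E}
    (hA : ∀ i, IsMonotoneScheme (A i)) : IsMonotoneScheme (interScheme A) := by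
  constructor
  · intro k s x hx
    simp only [interScheme, mem_iInter, Finset.mem_range] at hx ⊢
    intro i hi j hj
    by_cases hp : Nat.pair i j ≤ k
    · rw [dif_pos hp]
      have := hx i (by omega) j (by omega)
      rw [dif_pos (by omega : Nat.pair i j ≤ k + 1)] at this
      exact this
    · rw [dif_neg hp]; exact mem_univ x
  · intro k s t hst x hx
    simp only [interScheme, mem_iInter, Finset.mem_range] at hx ⊢
    intro i hi j hj
    by_cases hp : Nat.pair i j ≤ k
    · rw [dif_pos hp]
      have := hx i hi j hj
      rw [dif_pos hp] at this
      exact (hA i).2 j _ _ (fun l => hst _) this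
    · rw [dif_neg hp]; exact mem_univ x

lemma interScheme_souslinSet {A : ℕ → (k : ℕ) → (Fin (k + 1) → ℕ) → Set E} :
    souslinSet (interScheme A) = ⋂ i, souslinSet (A i) := by
  apply Set.Subset.antisymm
  · rintro x hx
    simp only [souslinSet, mem_iUnion] at hx
    obtain ⟨f, hf⟩ := hx
    have hf' := mem_iInter.1 hf
    refine mem_iInter.2 fun i => ?_
    simp only [souslinSet, mem_iUnion]
    refine ⟨fun l => f (Nat.pair i l), mem_iInter.2 fun j => ?_⟩
    have := hf' (Nat.pair i j)
    simp only [interScheme, mem_iInter, Finset.mem_range] at this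
    have h2 := this i (Nat.lt_succ_of_le (Nat.left_le_pair i j))
      j (Nat.lt_succ_of_le (Nat.right_le_pair i j))
    rw [dif_pos (le_refl (Nat.pair i j))] at h2
    exact h2
  · intro x hx
    have hx' := mem_iInter.1 hx
    have key : ∀ i, ∃ g : ℕ → ℕ, x ∈ ⋂ j, A i j fun l => g l := fun i => by
      have := hx' i
      simpa only [souslinSet, mem_iUnion] using this
    choose g hg using key
    simp only [souslinSet, mem_iUnion]
    refine ⟨fun n => g (Nat.unpair n).1 (Nat.unpair n).2, mem_iInter.2 fun k => ?_⟩
    simp only [interScheme, mem_iInter, Finset.mem_range]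
    intro i hi j hj
    by_cases hp : Nat.pair i j ≤ k
    · rw [dif_pos hp]
      have h2 := mem_iInter.1 (hg i) j
      convert h2 using 2
      funext l
      simp [Nat.unpair_pair]
    · rw [dif_neg hp]; exact mem_univ x
end InterScheme

section MSetLemmas
variable {F : MeasurableSpace Ω} {𝔽 : Filtration ℝ≥0 F}

lemma mem_MSet_of_basic {S : Set (Ω × ℝ≥0)} (h : S ∈ EStar 𝔽 ∨ S = univ) :
    S ∈ MSet 𝔽 := by
  refine ⟨fun _ _ => S, fun k s => h, ⟨fun k s => subset_rfl, fun k s t _ => subset_rfl⟩, ?_⟩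
  simp only [souslinSet, Set.iInter_const, Set.iUnion_const]

lemma MSet.iUnion_mem {S : ℕ → Set (Ω × ℝ≥0)} (h : ∀ i, S i ∈ MSet 𝔽) :
    (⋃ i, S i) ∈ MSet 𝔽 := by
  choose A hScheme hMono hEq using h
  refine ⟨unionScheme A, ?_, unionScheme_monotone hMono, ?_⟩
  · intro k s
    match k with
    | 0 => exact Or.inr rfl
    | (k + 1) =>
      exact EStar.biUnion' _ _ fun i _ => hScheme i k _
  · rw [unionScheme_souslinSet hMono]
    exact iUnion_congr hEq

lemma MSet.iInter_mem {S : ℕ → Set (Ω × ℝ≥0)} (h : ∀ i, S i ∈ MSet 𝔽) :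
    (⋂ i, S i) ∈ MSet 𝔽 := by
  choose A hScheme hMono hEq using h
  refine ⟨interScheme A, ?_, interScheme_monotone hMono, ?_⟩
  · intro k s
    refine EStar.biInter' _ _ fun i _ => EStar.biInter' _ _ fun j _ => ?_
    by_cases hp : Nat.pair i j ≤ k
    · rw [dif_pos hp]; exact hScheme i j _
    · rw [dif_neg hp]; exact Or.inr rfl
  · rw [interScheme_souslinSet]
    exact iInter_congr hEq
end MSetLemmas

section Generators
variable {F : MeasurableSpace Ω} {𝔽 : Filtration ℝ≥0 F}

lemma rayFrom_mem_MSet {ρ : Ω → ℝ≥0∞} (hρ : IsPredTime 𝔽 ρ) : rayFrom ρ ∈ MSet 𝔽 := by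
  have heq : rayFrom ρ = ⋃ n : ℕ, stInterval ρ (fun _ => (n : ℝ≥0∞)) := by
    ext p
    simp only [rayFrom, stInterval, mem_iUnion, mem_setOf_eq]
    constructor
    · intro h
      obtain ⟨n, hn⟩ := exists_nat_ge p.2
      exact ⟨n, h, by exact_mod_cast hn⟩
    · rintro ⟨n, h, _⟩; exact h
  rw [heq]
  exact MSet.iUnion_mem fun n => mem_MSet_of_basic (Or.inl
    (stInterval_mem_EStar hρ (isStopTime_const _) fun ω => ENNReal.natCast_lt_top n))

lemma compl_rayFrom_mem_MSet {ρ : Ω → ℝ≥0∞} (hρ : IsPredTime 𝔽 ρ) :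
    (rayFrom ρ)ᶜ ∈ MSet 𝔽 := by
  have hσ : IsPredTime 𝔽 (fun ω => if ρ ω = 0 then (⊤ : ℝ≥0∞) else 0) := isPredTime_jump hρ.1
  obtain ⟨hst, ρs, hρst, hfin, hle, hlt, hmono, htend⟩ := hρ
  have heq : (rayFrom ρ)ᶜ
      = ⋃ n : ℕ, stInterval (fun ω => if ρ ω = 0 then (⊤ : ℝ≥0∞) else 0)
          (fun ω => ρs n ω ⊓ (n : ℝ≥0∞)) := by
    ext p
    simp only [rayFrom, stInterval, mem_compl_iff, mem_iUnion, mem_setOf_eq, not_le, le_inf_iff]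
    constructor
    · intro h
      have hpos : ρ p.1 ≠ 0 := by
        intro h0; rw [h0] at h; exact absurd h (by simp)
      have hsup : (⨆ n, ρs n p.1) = ρ p.1 := announce_iSup hmono htend p.1
      have hlt' : (p.2 : ℝ≥0∞) < ⨆ n, ρs n p.1 := hsup ▸ h
      obtain ⟨n₀, hn₀⟩ := lt_iSup_iff.1 hlt'
      obtain ⟨m, hm⟩ := exists_nat_ge p.2
      refine ⟨max n₀ m, by simp [hpos], le_trans hn₀.le (hmono p.1 (le_max_left n₀ m)), ?_⟩
      calc (p.2 : ℝ≥0∞) ≤ (m : ℝ≥0∞) := by exact_mod_cast hm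
        _ ≤ ((max n₀ m : ℕ) : ℝ≥0∞) := by exact_mod_cast Nat.le_max_right n₀ m
    · rintro ⟨n, h1, h2, h3⟩
      by_cases h0 : ρ p.1 = 0
      · rw [if_pos h0] at h1
        exact absurd (lt_of_le_of_lt h1 ENNReal.coe_lt_top) (lt_irrefl ⊤)
      · exact lt_of_le_of_lt h2 (hlt n p.1 (pos_iff_ne_zero.2 h0))
  rw [heq]
  refine MSet.iUnion_mem fun n => mem_MSet_of_basic (Or.inl
    (stInterval_mem_EStar hσ ((hρst n).min' (isStopTime_const _))
      fun ω => lt_of_le_of_lt inf_le_right (ENNReal.natCast_lt_top n)))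
end Generators



/-- every predictable set is produced by the Souslin operation applied to
a monotone Souslin scheme with values in `ℰ*`. -/
theorem predictable_eq_souslin_monotone_scheme {Ω : Type*} {F : MeasurableSpace Ω}
    (𝔽 : Filtration ℝ≥0 F) (P : Set (Ω × ℝ≥0))
    (hP : MeasurableSet[predictableSigma 𝔽] P) :
    ∃ A : (k : ℕ) → (Fin (k + 1) → ℕ) → Set (Ω × ℝ≥0),
      IsSouslinScheme (EStar 𝔽) A ∧ IsMonotoneScheme A ∧ P = souslinSet A := by
  let m : MeasurableSpace (Ω × ℝ≥0) :=
    { MeasurableSet' := fun S => S ∈ MSet 𝔽 ∧ Sᶜ ∈ MSet 𝔽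
      measurableSet_empty := ⟨mem_MSet_of_basic (Or.inl empty_mem_EStar),
        by rw [compl_empty]; exact mem_MSet_of_basic (Or.inr rfl)⟩
      measurableSet_compl := fun S hS => ⟨hS.2, by rw [compl_compl]; exact hS.1⟩
      measurableSet_iUnion := fun g hg =>
        ⟨MSet.iUnion_mem fun i => (hg i).1,
         by rw [compl_iUnion]; exact MSet.iInter_mem fun i => (hg i).2⟩ }
  have hle : predictableSigma 𝔽 ≤ m := by
    apply MeasurableSpace.generateFrom_le
    rintro s ⟨ρ, hρ, rfl⟩
    exact ⟨rayFrom_mem_MSet hρ, compl_rayFrom_mem_MSet hρ⟩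
  obtain ⟨A, h1, h2, h3⟩ := (hle P hP).1
  exact ⟨A, h1, h2, h3⟩
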